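/- For every graph G, Δ(G) = T⁻(G). -/

import Mathlib

open SimpleGraph

/-- The set `W` induces a path in `G`. -/
def InducesPath {V : Type*} (G : SimpleGraph V) (W : Set V) : Prop :=
  ∃ n : ℕ, Nonempty ((G.induce W) ≃g SimpleGraph.pathGraph n)

/-- The set `U` is covered by `p` vertex-disjoint induced paths of `G`. -/
def IsPathCoverOn {V : Type*} (G : SimpleGraph V) (U : Set V) (p : ℕ) : Prop :=
  ∃ parts : Fin p → Set V,
    (∀ i, (parts i).Nonempty) ∧
    (Pairwise fun i j => Disjoint (parts i) (parts j)) ∧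
    (⋃ i, parts i) = U ∧
    ∀ i, InducesPath G (parts i)

/-- The induced subgraph of `G` on `U` is a vertex-disjoint union of `p` paths. -/
def IsDisjointPathsOn {V : Type*} (G : SimpleGraph V) (U : Set V) (p : ℕ) : Prop :=
  ∃ parts : Fin p → Set V,
    (∀ i, (parts i).Nonempty) ∧
    (Pairwise fun i j => Disjoint (parts i) (parts j)) ∧
    (⋃ i, parts i) = U ∧
    (∀ i, InducesPath G (parts i)) ∧
    (∀ i j, i ≠ j → ∀ u ∈ parts i, ∀ v ∈ parts j, ¬ G.Adj u v)

/-- The path cover number `P(G)`. -/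
noncomputable def pathCoverNumber {V : Type*} (G : SimpleGraph V) : ℕ :=
  sInf {p | IsPathCoverOn G Set.univ p}

/-- `Δ(G)`: max of `p - q` over deletions of `q` vertices leaving `p` disjoint paths. -/
noncomputable def deltaLow {V : Type*} [Fintype V] (G : SimpleGraph V) : ℤ :=
  sSup {d : ℤ | ∃ (S : Finset V) (p : ℕ),
    IsDisjointPathsOn G ((↑S : Set V)ᶜ) p ∧ d = (p : ℤ) - S.card}

/-- `Δ⁺(G)`: min of `p + q` over deletions of `q` vertices leaving `p` disjoint paths. -/
noncomputable def deltaPlus {V : Type*} [Fintype V] (G : SimpleGraph V) : ℕ :=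
  sInf {k | ∃ (S : Finset V) (p : ℕ),
    IsDisjointPathsOn G ((↑S : Set V)ᶜ) p ∧ k = p + S.card}

/-- `T⁻(G)`. -/
noncomputable def Tminus {V : Type*} [Fintype V] (G : SimpleGraph V) : ℤ :=
  sSup {d : ℤ | ∃ S : Finset V, (G.induce ((↑S : Set V)ᶜ)).IsAcyclic ∧
    d = (pathCoverNumber (G.induce ((↑S : Set V)ᶜ)) : ℤ) - S.card}

/-- `T⁺(G)`. -/
noncomputable def Tplus {V : Type*} [Fintype V] (G : SimpleGraph V) : ℕ :=
  sInf {k | ∃ S : Finset V, (G.induce ((↑S : Set V)ᶜ)).IsAcyclic ∧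
    k = pathCoverNumber (G.induce ((↑S : Set V)ᶜ)) + S.card}

/-- `A` is a symmetric real matrix whose graph is `G`, i.e. `A ∈ S(G)`. -/
def MatchesGraph {V : Type*} [Fintype V] (G : SimpleGraph V) (A : Matrix V V ℝ) : Prop :=
  A.IsSymm ∧ ∀ i j : V, i ≠ j → (A i j ≠ 0 ↔ G.Adj i j)

/-- The nullity of a square real matrix. -/
noncomputable def matNullity {V : Type*} [Fintype V] (A : Matrix V V ℝ) : ℕ :=
  Module.finrank ℝ (LinearMap.ker A.mulVecLin)

/-- `M(G)`: the maximum nullity (= maximum eigenvalue multiplicity). -/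
noncomputable def maxNullity {V : Type*} [Fintype V] [DecidableEq V] (G : SimpleGraph V) : ℕ :=
  sSup {k | ∃ A : Matrix V V ℝ, MatchesGraph G A ∧ matNullity A = k}

/-- `mr(G)`: the minimum rank. -/
noncomputable def minRank {V : Type*} [Fintype V] [DecidableEq V] (G : SimpleGraph V) : ℕ :=
  sInf {k | ∃ A : Matrix V V ℝ, MatchesGraph G A ∧ A.rank = k}

/-- Vertices colored by the zero forcing process started from `B`. -/
inductive ZFClosed {V : Type*} (G : SimpleGraph V) (B : Set V) : V → Prop
  | init (v : V) (h : v ∈ B) : ZFClosed G B v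
  | force (u v : V) (hu : ZFClosed G B u) (huv : G.Adj u v)
      (hforce : ∀ w, G.Adj u w → w ≠ v → ZFClosed G B w) : ZFClosed G B v

/-- `B` is a zero forcing set of `G`. -/
def IsZeroForcingSet {V : Type*} (G : SimpleGraph V) (B : Set V) : Prop :=
  ∀ v, ZFClosed G B v

/-- `Z(G)`: the zero forcing number. -/
noncomputable def zeroForcingNumber {V : Type*} [Fintype V] (G : SimpleGraph V) : ℕ :=
  sInf {k | ∃ B : Finset V, IsZeroForcingSet G ↑B ∧ B.card = k}

/-- The star graph on `Fin n`: vertex `0` adjacent to all others. -/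
def starGraph (n : ℕ) : SimpleGraph (Fin n) :=
  SimpleGraph.fromRel (fun i _ => i.val = 0)

/-- The wheel graph: a hub (`none`) joined to every vertex of a cycle on `Fin m`. -/
def wheelGraph (m : ℕ) : SimpleGraph (Option (Fin m)) :=
  SimpleGraph.fromRel (fun u v =>
    match u, v with
    | none, some _ => True
    | some i, some j => j.val = (i.val + 1) % m
    | _, _ => False)

/-- The `n`-sun: a cycle on `Fin n` (the `inl` vertices) with a pendant vertex
(`inr i`) attached to each cycle vertex (`inl i`). -/
def sunGraph (n : ℕ) : SimpleGraph (Fin n ⊕ Fin n) :=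
  SimpleGraph.fromRel (fun u v =>
    match u, v with
    | .inl i, .inl j => j.val = (i.val + 1) % n
    | .inl i, .inr j => i = j
    | _, _ => False)

namespace DT

variable {V : Type*} {G : SimpleGraph V}


lemma getVert_mem_support {u w : V} (p : G.Walk u w) (i : ℕ) : p.getVert i ∈ p.support := by
  rcases le_or_gt i p.length with h | h
  · exact Walk.mem_support_iff_exists_getVert.2 ⟨i, rfl, h⟩
  · rw [p.getVert_of_length_le h.le]; exact Walk.end_mem_support _

lemma getVert_injOn {u w : V} {p : G.Walk u w} (hp : p.IsPath) :
    ∀ i, i ≤ p.length → ∀ j, j ≤ p.length → p.getVert i = p.getVert j → i = j := by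
  induction p with
  | nil => simp
  | @cons a b c h q ih =>
    intro i hi j hj hij
    rw [Walk.cons_isPath_iff] at hp
    match i, j with
    | 0, 0 => rfl
    | 0, (j+1) =>
      exfalso
      rw [Walk.getVert_zero, Walk.getVert_cons_succ] at hij
      exact hp.2 (hij ▸ getVert_mem_support q j)
    | (i+1), 0 =>
      exfalso
      rw [Walk.getVert_zero, Walk.getVert_cons_succ] at hij
      exact hp.2 (hij ▸ getVert_mem_support q i)
    | (i+1), (j+1) =>
      rw [Walk.getVert_cons_succ, Walk.getVert_cons_succ] at hij
      simp only [Walk.length_cons, Nat.add_le_add_iff_right] at hi hj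
      exact congrArg (· + 1) (ih hp.1 i hi j hj hij)

lemma edge_getVert_mem_edges {u w : V} (p : G.Walk u w) {i : ℕ} (h : i < p.length) :
    s(p.getVert i, p.getVert (i+1)) ∈ p.edges := by
  induction p generalizing i with
  | nil => simp at h
  | @cons a b c hadj q ih =>
    match i with
    | 0 =>
      rw [Walk.getVert_zero, Walk.getVert_cons_succ, Walk.getVert_zero, Walk.edges_cons]
      exact List.mem_cons_self
    | (i+1) =>
      rw [Walk.getVert_cons_succ, Walk.getVert_cons_succ, Walk.edges_cons]
      exact List.mem_cons_of_mem _ (ih (by simpa using h))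

lemma exists_getVert_of_mem_edges {u w a b : V} {p : G.Walk u w} (h : s(a,b) ∈ p.edges) :
    ∃ i, i < p.length ∧ ((p.getVert i = a ∧ p.getVert (i+1) = b) ∨
      (p.getVert i = b ∧ p.getVert (i+1) = a)) := by
  induction p with
  | nil => simp at h
  | @cons x y c hadj q ih =>
    rw [Walk.edges_cons, List.mem_cons] at h
    rcases h with h | h
    · refine ⟨0, by simp, ?_⟩
      rw [Sym2.eq_iff] at h
      rcases h with ⟨rfl, rfl⟩ | ⟨rfl, rfl⟩
      · exact Or.inl ⟨Walk.getVert_zero _, by rw [Walk.getVert_cons_succ, Walk.getVert_zero]⟩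
      · exact Or.inr ⟨Walk.getVert_zero _, by rw [Walk.getVert_cons_succ, Walk.getVert_zero]⟩
    · obtain ⟨i, hi, hor⟩ := ih h
      exact ⟨i+1, by simpa using hi, by simpa only [Walk.getVert_cons_succ] using hor⟩




/-- An induced Hamiltonian path walk of the set `W`. -/
def GoodWalk (W : Set V) {u w : V} (p : G.Walk u w) : Prop :=
  p.IsPath ∧ (∀ x, x ∈ p.support ↔ x ∈ W) ∧
    (∀ x y, x ∈ W → y ∈ W → G.Adj x y → s(x,y) ∈ p.edges)

lemma GoodWalk.reverse {W : Set V} {u w : V} {p : G.Walk u w} (h : GoodWalk W p) :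
    GoodWalk W p.reverse :=
  ⟨h.1.reverse, fun x => by rw [Walk.support_reverse, List.mem_reverse]; exact h.2.1 x,
   fun x y hx hy hadj => by
     rw [Walk.edges_reverse, List.mem_reverse]; exact h.2.2 x y hx hy hadj⟩

lemma GoodWalk.inducesPath {W : Set V} {u w : V} {p : G.Walk u w} (h : GoodWalk W p) :
    InducesPath G W := by
  obtain ⟨hp, hsupp, hind⟩ := h
  refine ⟨p.length + 1, ⟨?_⟩⟩
  have hf : ∀ i : Fin (p.length + 1), p.getVert i ∈ W :=
    fun i => (hsupp _).1 (getVert_mem_support p i)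
  let f : Fin (p.length + 1) → ↥W := fun i => ⟨p.getVert i, hf i⟩
  have hbij : Function.Bijective f := by
    constructor
    · intro i j hij
      exact Fin.ext (getVert_injOn hp i (Nat.lt_succ_iff.1 i.isLt) j
        (Nat.lt_succ_iff.1 j.isLt) (congrArg Subtype.val hij))
    · rintro ⟨y, hy⟩
      obtain ⟨n, hn, hnle⟩ := Walk.mem_support_iff_exists_getVert.1 ((hsupp y).2 hy)
      exact ⟨⟨n, Nat.lt_succ_of_le hnle⟩, Subtype.ext hn⟩
  have key : ∀ i j : Fin (p.length + 1), G.Adj (p.getVert i) (p.getVert j) ↔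
      (pathGraph (p.length + 1)).Adj i j := by
    intro i j
    constructor
    · intro hadj
      have := hind _ _ (hf i) (hf j) hadj
      obtain ⟨k, hk, hor⟩ := exists_getVert_of_mem_edges this
      have hk1 : k ≤ p.length := hk.le
      have hk2 : k + 1 ≤ p.length := hk
      have hi := Nat.lt_succ_iff.1 i.isLt
      have hj := Nat.lt_succ_iff.1 j.isLt
      rw [pathGraph_adj]
      rcases hor with ⟨h1, h2⟩ | ⟨h1, h2⟩
      · left
        rw [getVert_injOn hp _ hi _ hk1 h1.symm, getVert_injOn hp _ hj _ hk2 h2.symm]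
      · right
        rw [getVert_injOn hp _ hj _ hk1 h1.symm, getVert_injOn hp _ hi _ hk2 h2.symm]
    · intro hadj
      rw [pathGraph_adj] at hadj
      rcases hadj with h1 | h1
      · have : (i : ℕ) < p.length := by omega
        have := p.adj_getVert_succ this
        rwa [show (i:ℕ) + 1 = (j:ℕ) from h1] at this
      · have : (j : ℕ) < p.length := by omega
        have := p.adj_getVert_succ this
        rw [show (j:ℕ) + 1 = (i:ℕ) from h1] at this
        exact this.symm
  exact Iso.symm ⟨Equiv.ofBijective f hbij, by
    intro i j
    simp only [Equiv.ofBijective_apply, comap_adj, Function.Embedding.coe_subtype, f]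
    exact key i j⟩

lemma pathGraph_isAcyclic (n : ℕ) : (pathGraph n).IsAcyclic := by
  intro a c hc
  match c, hc with
  | Walk.cons hadj q, hc =>
    have hq : q.IsPath ∧ _ := (Walk.cons_isCycle_iff _ _).1 hc
    have hlen : 2 ≤ q.length := by
      have := hc.three_le_length
      simp only [Walk.length_cons] at this
      omega
    -- q : Walk b a, hadj : Adj a b
    obtain ⟨k, hk, hkmax⟩ := Finset.exists_max_image (Finset.range (q.length + 1))
      (fun i => (q.getVert i).val) ⟨0, Finset.mem_range.2 (Nat.succ_pos _)⟩
    rw [Finset.mem_range, Nat.lt_succ_iff] at hk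
    have hmax : ∀ i, i ≤ q.length → (q.getVert i).val ≤ (q.getVert k).val := by
      intro i hi
      exact hkmax i (Finset.mem_range.2 (Nat.lt_succ_of_le hi))
    set m := q.getVert k with hm
    have hnbr : ∀ x : Fin n, (pathGraph n).Adj x m → (x:ℕ) ≤ (m:ℕ) → (x:ℕ) + 1 = (m:ℕ) := by
      intro x hx hle
      rcases pathGraph_adj.1 hx with h | h
      · exact h
      · omega
    rcases Nat.eq_zero_or_pos k with rfl | hk0
    · -- k = 0 : m = b, neighbors a and q.getVert 1
      have h1 : (pathGraph n).Adj (q.getVert 1) m := by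
        have := q.adj_getVert_succ (by omega : 0 < q.length)
        rw [Walk.getVert_zero] at this
        exact (by simpa [hm, Walk.getVert_zero] using this.symm)
      have h2 : (pathGraph n).Adj a m := by
        rw [hm, Walk.getVert_zero]; exact hadj
      have e1 : ((q.getVert 1) : ℕ) + 1 = (m:ℕ) := hnbr _ h1 (by
        have := hmax 1 (by omega); omega)
      have e2 : (a : ℕ) + 1 = (m:ℕ) := by
        refine hnbr _ h2 ?_
        have : a = q.getVert q.length := (q.getVert_length).symm
        rw [this]; exact hmax _ le_rfl
      have : q.getVert 1 = a := Fin.ext (by omega)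
      have : q.getVert 1 = q.getVert q.length := by rw [this, q.getVert_length]
      have := getVert_injOn hq.1 1 (by omega) q.length le_rfl this
      omega
    · rcases eq_or_lt_of_le hk with rfl | hklt
      · -- k = length : m = a
        have h1 : (pathGraph n).Adj (q.getVert (q.length - 1)) m := by
          have := q.adj_getVert_succ (by omega : q.length - 1 < q.length)
          rw [show q.length - 1 + 1 = q.length by omega] at this
          simpa [hm] using this
        have h2 : (pathGraph n).Adj (q.getVert 0) m := by
          rw [Walk.getVert_zero, hm, Walk.getVert_length]
          exact hadj.symm
        have e1 := hnbr _ h1 (hmax _ (by omega))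
        have e2 := hnbr _ h2 (hmax 0 (by omega))
        have : q.getVert (q.length - 1) = q.getVert 0 := Fin.ext (by omega)
        have := getVert_injOn hq.1 _ (by omega) 0 (by omega) this
        omega
      · -- interior
        have h1 : (pathGraph n).Adj (q.getVert (k - 1)) m := by
          have := q.adj_getVert_succ (by omega : k - 1 < q.length)
          rw [show k - 1 + 1 = k by omega] at this
          simpa [hm] using this
        have h2 : (pathGraph n).Adj (q.getVert (k + 1)) m := by
          have := q.adj_getVert_succ (by omega : k < q.length)
          simpa [hm] using this.symm
        have e1 := hnbr _ h1 (hmax _ (by omega))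
        have e2 := hnbr _ h2 (hmax _ (by omega))
        have : q.getVert (k - 1) = q.getVert (k + 1) := Fin.ext (by omega)
        have := getVert_injOn hq.1 _ (by omega) (k+1) (by omega) this
        omega

def inducedWalk {s : Set V} : ∀ {a b : V} (p : G.Walk a b) (h : ∀ x ∈ p.support, x ∈ s),
    (G.induce s).Walk ⟨a, h a p.start_mem_support⟩ ⟨b, h b p.end_mem_support⟩
  | _, _, Walk.nil, _ => Walk.nil
  | _, _, Walk.cons hadj q, h =>
    Walk.cons (by simpa using hadj) (inducedWalk q (fun x hx => h x (by simp [hx])))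

lemma map_inducedWalk {s : Set V} {a b : V} (p : G.Walk a b) (h : ∀ x ∈ p.support, x ∈ s) :
    (inducedWalk p h).map ((Embedding.induce s : G.induce s ↪g G)).toHom = p := by
  induction p with
  | nil => rfl
  | cons hadj q ih => simp only [inducedWalk, Walk.map_cons]; rw [ih]; rfl

lemma inducedWalk_isCycle {s : Set V} {a : V} (c : G.Walk a a) (hc : c.IsCycle)
    (h : ∀ x ∈ c.support, x ∈ s) : (inducedWalk c h).IsCycle := by
  rw [← Walk.map_isCycle_iff_of_injective (f := ((Embedding.induce s : G.induce s ↪g G)).toHom)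
    (Embedding.induce s : G.induce s ↪g G).injective, map_inducedWalk]
  exact hc

/-- No cycle of `G` has its support inside `U`. -/
def NoCycleIn (G : SimpleGraph V) (U : Set V) : Prop :=
  ∀ (a : V) (c : G.Walk a a), (∀ x ∈ c.support, x ∈ U) → ¬ c.IsCycle

lemma noCycleIn_of_isAcyclic {U : Set V} (h : (G.induce U).IsAcyclic) : NoCycleIn G U :=
  fun _ c hsub hc => h _ (inducedWalk_isCycle c hc hsub)

lemma isAcyclic_induce_of_noCycleIn {U : Set V} (h : NoCycleIn G U) :
    (G.induce U).IsAcyclic := by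
  intro a c hc
  refine h a.val (c.map ((Embedding.induce U : G.induce U ↪g G)).toHom) ?_ (hc.map (Embedding.induce U : G.induce U ↪g G).injective)
  intro x hx
  change x ∈ (c.map ((Embedding.induce U : G.induce U ↪g G)).toHom).support at hx
  rw [Walk.support_map, List.mem_map] at hx
  obtain ⟨y, _, rfl⟩ := hx
  exact y.2

lemma NoCycleIn.mono {U U' : Set V} (h : NoCycleIn G U) (hsub : U' ⊆ U) : NoCycleIn G U' :=
  fun a c hs hc => h a c (fun x hx => hsub (hs x hx)) hc

lemma InducesPath.exists_walk {W : Set V} (h : InducesPath G W) {x y : V}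
    (hx : x ∈ W) (hy : y ∈ W) : ∃ p : G.Walk x y, ∀ z ∈ p.support, z ∈ W := by
  obtain ⟨n, ⟨φ⟩⟩ := h
  obtain ⟨q⟩ := pathGraph_preconnected n (φ ⟨x, hx⟩) (φ ⟨y, hy⟩)
  let q' := (q.map φ.symm.toHom).copy (φ.symm_apply_apply _) (φ.symm_apply_apply _)
  refine ⟨q'.map ((Embedding.induce W : G.induce W ↪g G)).toHom, ?_⟩
  intro z hz
  change z ∈ (q'.map ((Embedding.induce W : G.induce W ↪g G)).toHom).support at hz
  rw [Walk.support_map, List.mem_map] at hz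
  obtain ⟨y, _, rfl⟩ := hz
  exact y.2

lemma exists_cross {S : Set V} {a b : V} (q : G.Walk a b) : a ∈ S → b ∉ S →
    ∃ x z, x ∈ S ∧ z ∉ S ∧ x ∈ q.support ∧ z ∈ q.support ∧ G.Adj x z := by
  induction q with
  | nil => intro ha hb; exact absurd ha hb
  | @cons u v w hadj q ih =>
    intro ha hb
    by_cases hv : v ∈ S
    · obtain ⟨x, z, h1, h2, h3, h4, h5⟩ := ih hv hb
      exact ⟨x, z, h1, h2, by simp [h3], by simp [h4], h5⟩
    · exact ⟨u, v, ha, hv, by simp, by simp [Walk.start_mem_support], hadj⟩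

lemma GoodWalk.end_of_nbr_unique {W : Set V} {u w : V} {p : G.Walk u w} (hg : GoodWalk W p)
    {c : V} (hc : c ∈ W) (h1 : ∀ y z, y ∈ W → z ∈ W → G.Adj c y → G.Adj c z → y = z) :
    c = u ∨ c = w := by
  obtain ⟨k, hk, hkle⟩ := Walk.mem_support_iff_exists_getVert.1 ((hg.2.1 c).2 hc)
  rcases Nat.eq_zero_or_pos k with rfl | hk0
  · left; rw [← hk, Walk.getVert_zero]
  rcases eq_or_lt_of_le hkle with rfl | hklt
  · right; rw [← hk, Walk.getVert_length]
  · exfalso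
    have hprev : G.Adj c (p.getVert (k-1)) := by
      have := p.adj_getVert_succ (by omega : k - 1 < p.length)
      rw [show k - 1 + 1 = k by omega, hk] at this
      exact this.symm
    have hnext : G.Adj c (p.getVert (k+1)) := by
      have := p.adj_getVert_succ hklt
      rwa [hk] at this
    have hmem1 : p.getVert (k-1) ∈ W := (hg.2.1 _).1 (getVert_mem_support _ _)
    have hmem2 : p.getVert (k+1) ∈ W := (hg.2.1 _).1 (getVert_mem_support _ _)
    have := h1 _ _ hmem1 hmem2 hprev hnext
    have := getVert_injOn hg.1 (k-1) (by omega) (k+1) (by omega) this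
    omega

lemma GoodWalk.glue {W₁ W₂ : Set V} {v u₁ c₁ c₂ u₂ : V}
    {p₁ : G.Walk u₁ c₁} {p₂ : G.Walk c₂ u₂}
    (h₁ : GoodWalk W₁ p₁) (h₂ : GoodWalk W₂ p₂)
    (hdisj : ∀ x ∈ W₁, x ∉ W₂)
    (hnadj : ∀ x ∈ W₁, ∀ y ∈ W₂, ¬ G.Adj x y)
    (hv1 : v ∉ W₁) (hv2 : v ∉ W₂)
    (ha1 : G.Adj c₁ v) (ha2 : G.Adj v c₂)
    (hu1 : ∀ y ∈ W₁, G.Adj v y → y = c₁) (hu2 : ∀ y ∈ W₂, G.Adj v y → y = c₂) :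
    GoodWalk (W₁ ∪ {v} ∪ W₂) (p₁.append (Walk.cons ha1 (Walk.cons ha2 p₂))) := by
  have hsupp : (p₁.append (Walk.cons ha1 (Walk.cons ha2 p₂))).support
      = p₁.support ++ (v :: p₂.support) := by
    rw [Walk.support_append]; rfl
  have hmem : ∀ x, x ∈ (p₁.append (Walk.cons ha1 (Walk.cons ha2 p₂))).support
      ↔ x ∈ W₁ ∪ {v} ∪ W₂ := by
    intro x
    rw [hsupp]
    simp only [List.mem_append, List.mem_cons, Set.mem_union, Set.mem_singleton_iff]
    rw [h₁.2.1 x, h₂.2.1 x]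
    tauto
  refine ⟨?_, hmem, ?_⟩
  · rw [Walk.isPath_def, hsupp]
    rw [List.nodup_append]
    refine ⟨h₁.1.support_nodup, ?_, ?_⟩
    · rw [List.nodup_cons]
      exact ⟨fun hv => hv2 ((h₂.2.1 v).1 hv), h₂.1.support_nodup⟩
    · intro x hx
      have hxW : x ∈ W₁ := (h₁.2.1 x).1 hx
      simp only [List.mem_cons]
      rintro b (rfl | hx2) hxb
      · exact hv1 (hxb ▸ hxW)
      · exact hdisj x hxW ((h₂.2.1 x).1 (hxb ▸ hx2))
  · have hedges : (p₁.append (Walk.cons ha1 (Walk.cons ha2 p₂))).edges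
        = p₁.edges ++ (s(c₁, v) :: s(v, c₂) :: p₂.edges) := by
      rw [Walk.edges_append]; rfl
    intro x y hx hy hadj
    rw [hedges]
    simp only [List.mem_append, List.mem_cons]
    simp only [Set.mem_union, Set.mem_singleton_iff] at hx hy
    rcases hx with (hx | rfl) | hx
    · rcases hy with (hy | rfl) | hy
      · exact Or.inl (h₁.2.2 x y hx hy hadj)
      · have : x = c₁ := hu1 x hx hadj.symm
        subst this; exact Or.inr (Or.inl rfl)
      · exact absurd hadj (hnadj x hx y hy)
    · rcases hy with (hy | rfl) | hy
      · have : y = c₁ := hu1 y hy hadj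
        subst this; exact Or.inr (Or.inl (Sym2.eq_swap))
      · exact absurd rfl hadj.ne
      · have : y = c₂ := hu2 y hy hadj
        subst this; exact Or.inr (Or.inr (Or.inl rfl))
    · rcases hy with (hy | rfl) | hy
      · exact absurd hadj.symm (hnadj y hy x hx)
      · have : x = c₂ := hu2 x hx hadj.symm
        subst this; exact Or.inr (Or.inr (Or.inl Sym2.eq_swap))
      · exact Or.inr (Or.inr (Or.inr (h₂.2.2 x y hx hy hadj)))

lemma exists_goodWalk [Fintype V] {C : Set V} (hNC : NoCycleIn G C) (hne : C.Nonempty)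
    (hconn : ∀ x ∈ C, ∀ y ∈ C, ∃ p : G.Walk x y, ∀ z ∈ p.support, z ∈ C)
    (hdeg : ∀ x ∈ C, ∀ a ∈ C, ∀ b ∈ C, ∀ c ∈ C,
      G.Adj x a → G.Adj x b → G.Adj x c → a = b ∨ a = c ∨ b = c) :
    ∃ (u w : V) (p : G.Walk u w), GoodWalk C p := by
  classical
  obtain ⟨x₀, hx₀⟩ := hne
  set L : Set ℕ := {n | ∃ (u w : V) (p : G.Walk u w),
    p.IsPath ∧ (∀ z ∈ p.support, z ∈ C) ∧ p.length = n} with hL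
  have hLne : L.Nonempty := ⟨0, x₀, x₀, Walk.nil, Walk.IsPath.nil, by simpa using hx₀, rfl⟩
  have hLbdd : BddAbove L := by
    refine ⟨Fintype.card V, ?_⟩
    rintro n ⟨u, w, p, hp, _, rfl⟩
    exact hp.length_lt.le
  obtain ⟨u, w, p, hp, hsub, hlen⟩ := Nat.sSup_mem hLne hLbdd
  have hmax : ∀ m ∈ L, m ≤ p.length := by rw [hlen]; exact fun m hm => le_csSup hLbdd hm
  have hcov : ∀ y ∈ C, y ∈ p.support := by
    by_contra hcon
    push_neg at hcon
    obtain ⟨y, hyC, hyn⟩ := hcon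
    obtain ⟨q, hq⟩ := hconn u (hsub u p.start_mem_support) y hyC
    obtain ⟨x, z, hxS, hzS, hxq, hzq, hadj⟩ :=
      exists_cross (S := {t | t ∈ p.support}) q p.start_mem_support hyn
    have hzC : z ∈ C := hq z hzq
    have hxC : x ∈ C := hsub x hxS
    by_cases hxu : x = u
    · subst hxu
      have hmem : p.length + 1 ∈ L := by
        refine ⟨z, w, Walk.cons hadj.symm p, (Walk.cons_isPath_iff _ _).2 ⟨hp, hzS⟩, ?_, by simp⟩
        intro t ht
        rw [Walk.support_cons, List.mem_cons] at ht
        rcases ht with rfl | ht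
        · exact hzC
        · exact hsub t ht
      have := hmax _ hmem; omega
    by_cases hxw : x = w
    · subst hxw
      have hmem : p.length + 1 ∈ L := by
        refine ⟨u, z, p.append (Walk.cons hadj Walk.nil), ?_, ?_, by simp⟩
        · rw [Walk.isPath_def, Walk.support_append, Walk.support_cons, Walk.support_nil]
          simp only [List.tail_cons]
          rw [List.nodup_append]
          exact ⟨hp.support_nodup, List.nodup_singleton z,
            by intro t ht b hb; rw [List.mem_singleton] at hb; rintro rfl; exact hzS (hb ▸ ht)⟩
        · intro t ht
          rw [Walk.mem_support_append_iff] at ht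
          rcases ht with ht | ht
          · exact hsub t ht
          · rw [Walk.support_cons, Walk.support_nil, List.mem_cons, List.mem_singleton] at ht
            rcases ht with rfl | rfl
            · exact hxC
            · exact hzC
      have := hmax _ hmem; omega
    · obtain ⟨k, hk, hkle⟩ := Walk.mem_support_iff_exists_getVert.1 hxS
      have hk0 : k ≠ 0 := by rintro rfl; rw [Walk.getVert_zero] at hk; exact hxu hk.symm
      have hkl : k ≠ p.length := by rintro rfl; rw [Walk.getVert_length] at hk; exact hxw hk.symm
      have hprev : G.Adj x (p.getVert (k-1)) := by
        have := p.adj_getVert_succ (by omega : k - 1 < p.length)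
        rw [show k - 1 + 1 = k by omega, hk] at this
        exact this.symm
      have hnext : G.Adj x (p.getVert (k+1)) := by
        have := p.adj_getVert_succ (by omega : k < p.length)
        rwa [hk] at this
      have h1 : p.getVert (k-1) ∈ C := hsub _ (getVert_mem_support _ _)
      have h2 : p.getVert (k+1) ∈ C := hsub _ (getVert_mem_support _ _)
      rcases hdeg x hxC z hzC _ h1 _ h2 hadj hprev hnext with h | h | h
      · exact hzS (h ▸ getVert_mem_support p (k-1))
      · exact hzS (h ▸ getVert_mem_support p (k+1))
      · have := getVert_injOn hp (k-1) (by omega) (k+1) (by omega) h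
        omega
  have hiff : ∀ t, t ∈ p.support ↔ t ∈ C := fun t => ⟨hsub t, hcov t⟩
  have key : ∀ i j : ℕ, i < j → j ≤ p.length → G.Adj (p.getVert i) (p.getVert j) →
      s(p.getVert i, p.getVert j) ∈ p.edges := by
    intro i j hij hjle hadj
    rcases eq_or_lt_of_le (show i + 1 ≤ j by omega) with rfl | hij2
    · exact edge_getVert_mem_edges p (by omega)
    rcases eq_or_lt_of_le hjle with rfl | hjlt
    · rcases Nat.eq_zero_or_pos i with rfl | hi0
      · -- i = 0, j = length : cycle
        exfalso
        have hadj' : G.Adj u w := by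
          rwa [Walk.getVert_zero, Walk.getVert_length] at hadj
        have hnotmem : s(w, u) ∉ p.edges := by
          intro hmem
          obtain ⟨t, ht, hor⟩ := exists_getVert_of_mem_edges hmem
          rcases hor with ⟨ha, hb⟩ | ⟨ha, hb⟩
          · have : t = p.length := getVert_injOn hp t (by omega) p.length le_rfl
              (by rw [ha, Walk.getVert_length])
            omega
          · have ht0 : t = 0 := getVert_injOn hp t (by omega) 0 (by omega)
              (by rw [ha, Walk.getVert_zero])
            subst ht0
            have : (1 : ℕ) = p.length := getVert_injOn hp 1 (by omega) p.length le_rfl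
              (by rw [hb, Walk.getVert_length])
            omega
        have hcyc : (Walk.cons hadj'.symm p).IsCycle :=
          (Walk.cons_isCycle_iff p hadj'.symm).2 ⟨hp, hnotmem⟩
        refine hNC w (Walk.cons hadj'.symm p) ?_ hcyc
        intro t ht
        rw [Walk.support_cons, List.mem_cons] at ht
        rcases ht with rfl | ht
        · exact hsub _ p.end_mem_support
        · exact hsub t ht
      · -- j = length, i > 0
        exfalso
        have ha1 : G.Adj (p.getVert i) (p.getVert (i-1)) := by
          have := p.adj_getVert_succ (by omega : i - 1 < p.length)
          rw [show i - 1 + 1 = i by omega] at this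
          exact this.symm
        have ha2 : G.Adj (p.getVert i) (p.getVert (i+1)) :=
          p.adj_getVert_succ (by omega)
        have hmem : ∀ t : ℕ, p.getVert t ∈ C := fun t => hsub _ (getVert_mem_support _ _)
        rcases hdeg _ (hmem i) _ (hmem p.length) _ (hmem (i-1)) _ (hmem (i+1))
          hadj ha1 ha2 with h | h | h
        · have := getVert_injOn hp p.length le_rfl (i-1) (by omega) h; omega
        · have := getVert_injOn hp p.length le_rfl (i+1) (by omega) h; omega
        · have := getVert_injOn hp (i-1) (by omega) (i+1) (by omega) h; omega
    · -- j < length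
      exfalso
      have ha1 : G.Adj (p.getVert j) (p.getVert (j-1)) := by
        have := p.adj_getVert_succ (by omega : j - 1 < p.length)
        rw [show j - 1 + 1 = j by omega] at this
        exact this.symm
      have ha2 : G.Adj (p.getVert j) (p.getVert (j+1)) :=
        p.adj_getVert_succ (by omega)
      have hmem : ∀ t : ℕ, p.getVert t ∈ C := fun t => hsub _ (getVert_mem_support _ _)
      rcases hdeg _ (hmem j) _ (hmem i) _ (hmem (j-1)) _ (hmem (j+1))
        hadj.symm ha1 ha2 with h | h | h
      · have := getVert_injOn hp i (by omega) (j-1) (by omega) h; omega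
      · have := getVert_injOn hp i (by omega) (j+1) (by omega) h; omega
      · have := getVert_injOn hp (j-1) (by omega) (j+1) (by omega) h; omega
  refine ⟨u, w, p, hp, hiff, ?_⟩
  intro x y hx hy hadj
  obtain ⟨i, hi, hile⟩ := Walk.mem_support_iff_exists_getVert.1 ((hiff x).2 hx)
  obtain ⟨j, hj, hjle⟩ := Walk.mem_support_iff_exists_getVert.1 ((hiff y).2 hy)
  subst hi; subst hj
  rcases lt_trichotomy i j with h | rfl | h
  · exact key i j h hjle hadj
  · exact absurd rfl hadj.ne
  · rw [Sym2.eq_swap]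
    exact key j i h hile hadj.symm

/-- Double-induce iso. -/
noncomputable def doubleInduceIso (U : Set V) (W : Set ↥U) :
    (G.induce U).induce W ≃g G.induce (Subtype.val '' W) where
  toEquiv := Equiv.Set.image Subtype.val W Subtype.val_injective
  map_rel_iff' := by
    intro a b
    simp [Equiv.Set.image, Equiv.Set.imageOfInjOn, comap_adj]

lemma inducesPath_image_iff {U : Set V} {W : Set ↥U} :
    InducesPath (G.induce U) W ↔ InducesPath G (Subtype.val '' W) := by
  constructor
  · rintro ⟨n, ⟨φ⟩⟩
    exact ⟨n, ⟨((doubleInduceIso U W).symm).trans φ⟩⟩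
  · rintro ⟨n, ⟨φ⟩⟩
    exact ⟨n, ⟨(doubleInduceIso U W).trans φ⟩⟩

lemma inducesPath_singleton (x : V) : InducesPath G {x} := by
  refine ⟨1, ⟨?_⟩⟩
  refine ⟨Equiv.ofUnique _ _, ?_⟩
  intro a b
  constructor
  · intro h; exact absurd (Subsingleton.elim a b ▸ h) ((pathGraph 1).loopless.irrefl _)
  · intro h; exact absurd (Subsingleton.elim a b ▸ h) ((G.induce _).loopless.irrefl _)

lemma exists_cover [Fintype V] (U : Set V) :
    ∃ m ≤ Fintype.card V, IsPathCoverOn G U m := by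
  classical
  let F : Finset V := Set.toFinset U
  refine ⟨F.card, Finset.card_le_univ F, fun i => {(F.equivFin.symm i).val}, ?_, ?_, ?_, ?_⟩
  · intro i; exact Set.singleton_nonempty _
  · intro i j hij
    simp only [Set.disjoint_singleton_left, Set.mem_singleton_iff]
    intro h
    exact hij (F.equivFin.symm.injective (Subtype.ext h))
  · ext x
    simp only [Set.mem_iUnion, Set.mem_singleton_iff]
    constructor
    · rintro ⟨i, rfl⟩
      exact Set.mem_toFinset.1 (F.equivFin.symm i).2
    · intro hx
      exact ⟨F.equivFin ⟨x, Set.mem_toFinset.2 hx⟩, by simp⟩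
  · intro i; exact inducesPath_singleton _

/-- Path cover number of a vertex set, at the ambient level. -/
noncomputable def PCN (G : SimpleGraph V) (U : Set V) : ℕ :=
  sInf {p | IsPathCoverOn G U p}

lemma isPathCoverOn_induce_iff {U : Set V} {p : ℕ} :
    IsPathCoverOn (G.induce U) Set.univ p ↔ IsPathCoverOn G U p := by
  constructor
  · rintro ⟨parts, h1, h2, h3, h4⟩
    refine ⟨fun i => Subtype.val '' parts i, fun i => (h1 i).image _, ?_, ?_,
      fun i => inducesPath_image_iff.1 (h4 i)⟩
    · intro i j hij
      exact (Set.disjoint_image_iff Subtype.val_injective).2 (h2 hij)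
    · rw [← Set.image_iUnion, h3, Subtype.coe_image_univ]
  · rintro ⟨parts, h1, h2, h3, h4⟩
    have hsub : ∀ i, parts i ⊆ U := fun i => h3 ▸ Set.subset_iUnion parts i
    refine ⟨fun i => Subtype.val ⁻¹' parts i, ?_, ?_, ?_, ?_⟩
    · intro i
      obtain ⟨x, hx⟩ := h1 i
      exact ⟨⟨x, hsub i hx⟩, hx⟩
    · intro i j hij
      exact (h2 hij).preimage _
    · ext ⟨x, hx⟩
      simp only [Set.mem_iUnion, Set.mem_preimage, Set.mem_univ, iff_true]
      have : x ∈ ⋃ i, parts i := h3.symm ▸ hx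
      exact Set.mem_iUnion.1 this
    · intro i
      rw [inducesPath_image_iff, Set.image_preimage_eq_of_subset
        (by rw [Subtype.range_coe]; exact hsub i)]
      exact h4 i

lemma pathCoverNumber_induce_eq (U : Set V) : pathCoverNumber (G.induce U) = PCN G U := by
  unfold pathCoverNumber PCN
  congr 1
  ext p
  exact isPathCoverOn_induce_iff

lemma PCN_mem [Fintype V] (U : Set V) : IsPathCoverOn G U (PCN G U) := by
  obtain ⟨m, _, hm⟩ := exists_cover (G := G) U
  have hne : {p | IsPathCoverOn G U p}.Nonempty := ⟨m, hm⟩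
  exact Nat.sInf_mem hne

lemma PCN_le [Fintype V] {U : Set V} {m : ℕ} (h : IsPathCoverOn G U m) : PCN G U ≤ m :=
  Nat.sInf_le (by exact h)

lemma PCN_le_card [Fintype V] (U : Set V) : PCN G U ≤ Fintype.card V := by
  obtain ⟨m, hm1, hm2⟩ := exists_cover (G := G) U
  exact le_trans (PCN_le hm2) hm1

/-- Walks stay inside their part when parts are mutually non-adjacent. -/
lemma walk_confined {p : ℕ} {parts : Fin p → Set V} {U : Set V}
    (hU : (⋃ i, parts i) = U)
    (hnadj : ∀ i j, i ≠ j → ∀ u ∈ parts i, ∀ v ∈ parts j, ¬ G.Adj u v)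
    {a b : V} (q : G.Walk a b) (hsub : ∀ z ∈ q.support, z ∈ U) {i : Fin p}
    (ha : a ∈ parts i) : ∀ z ∈ q.support, z ∈ parts i := by
  induction q with
  | nil => intro z hz; rw [Walk.support_nil, List.mem_singleton] at hz; exact hz ▸ ha
  | @cons u v w hadj q ih =>
    intro z hz
    have hvU : v ∈ U := hsub v (by simp [Walk.start_mem_support])
    have hvi : v ∈ parts i := by
      have := hU ▸ hvU
      obtain ⟨j, hj⟩ := Set.mem_iUnion.1 this
      by_cases hij : j = i
      · exact hij ▸ hj
      · exact absurd hadj (hnadj i j (Ne.symm hij) u ha v hj)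
    rw [Walk.support_cons, List.mem_cons] at hz
    rcases hz with rfl | hz
    · exact ha
    · exact ih (fun t ht => hsub t (by simp [ht])) hvi z hz

lemma noCycleIn_of_disjointPaths [Fintype V] {U : Set V} {p : ℕ}
    (h : IsDisjointPathsOn G U p) : NoCycleIn G U := by
  obtain ⟨parts, h1, h2, h3, h4, h5⟩ := h
  intro a c hsub hc
  have haU : a ∈ U := hsub a c.start_mem_support
  obtain ⟨i, hi⟩ := Set.mem_iUnion.1 (h3 ▸ haU)
  have hconf : ∀ z ∈ c.support, z ∈ parts i :=
    walk_confined h3 h5 c hsub hi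
  obtain ⟨n, ⟨φ⟩⟩ := h4 i
  have hcyc' := inducedWalk_isCycle c hc hconf
  have := Walk.IsCycle.map (f := φ.toHom) φ.injective hcyc'
  exact pathGraph_isAcyclic n _ this

lemma le_PCN_of_disjointPaths [Fintype V] {U : Set V} {p : ℕ}
    (h : IsDisjointPathsOn G U p) : p ≤ PCN G U := by
  classical
  obtain ⟨parts, h1, h2, h3, h4, h5⟩ := h
  obtain ⟨parts', g1, g2, g3, g4⟩ := PCN_mem (G := G) U
  -- map each i to the index of the cover part containing a chosen point
  have hchoice : ∀ i : Fin p, ∃ j : Fin (PCN G U), ∃ x, x ∈ parts i ∧ x ∈ parts' j := by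
    intro i
    obtain ⟨x, hx⟩ := h1 i
    have hxU : x ∈ ⋃ j, parts' j := by
      rw [g3, ← h3]
      exact Set.mem_iUnion.2 ⟨i, hx⟩
    obtain ⟨j, hj⟩ := Set.mem_iUnion.1 hxU
    exact ⟨j, x, hx, hj⟩
  choose f x hx1 hx2 using hchoice
  have hinj : Function.Injective f := by
    intro i1 i2 hf
    by_contra hne
    -- walk from x i1 to x i2 within parts' (f i1)
    obtain ⟨q, hq⟩ := InducesPath.exists_walk (g4 (f i1)) (hx2 i1) (by rw [hf]; exact hx2 i2)
    have hsubU : ∀ z ∈ q.support, z ∈ U :=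
      fun z hz => g3 ▸ Set.mem_iUnion.2 ⟨f i1, hq z hz⟩
    have hmem := walk_confined h3 h5 q hsubU (hx1 i1) _ q.end_mem_support
    exact Set.disjoint_left.1 (h2 hne) hmem (hx1 i2)
  simpa using Fintype.card_le_of_injective f hinj

/-- `x` has at most two neighbors inside `U`. -/
def NoBranch (G : SimpleGraph V) (U : Set V) (x : V) : Prop :=
  ∀ a ∈ U, ∀ b ∈ U, ∀ c ∈ U, G.Adj x a → G.Adj x b → G.Adj x c → a = b ∨ a = c ∨ b = c

section comps

variable {U : Set V}

/-- The vertex set (in `V`) of a connected component of `G.induce U`. -/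
def compSet (G : SimpleGraph V) (U : Set V) (c : (G.induce U).ConnectedComponent) : Set V :=
  Subtype.val '' c.supp

lemma compSet_subset {c : (G.induce U).ConnectedComponent} : compSet G U c ⊆ U := by
  rintro x ⟨y, _, rfl⟩; exact y.2

lemma compSet_nonempty (c : (G.induce U).ConnectedComponent) : (compSet G U c).Nonempty := by
  obtain ⟨v, rfl⟩ := c.exists_rep
  exact ⟨v.val, v, rfl, rfl⟩

lemma mem_compSet {x : V} {c : (G.induce U).ConnectedComponent} :
    x ∈ compSet G U c ↔ ∃ hx : x ∈ U, (G.induce U).connectedComponentMk ⟨x, hx⟩ = c := by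
  constructor
  · rintro ⟨y, hy, rfl⟩
    exact ⟨y.2, by rw [ConnectedComponent.mem_supp_iff] at hy; exact hy⟩
  · rintro ⟨hx, hc⟩
    exact ⟨⟨x, hx⟩, by rw [ConnectedComponent.mem_supp_iff]; exact hc, rfl⟩

lemma comp_of_walk_support {a b : ↥U} (q : (G.induce U).Walk a b) {z : ↥U}
    (hz : z ∈ q.support) :
    (G.induce U).connectedComponentMk z = (G.induce U).connectedComponentMk a := by
  classical
  exact ConnectedComponent.sound ⟨(q.takeUntil z hz).reverse⟩

lemma compSet_walk {c : (G.induce U).ConnectedComponent} {x y : V}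
    (hx : x ∈ compSet G U c) (hy : y ∈ compSet G U c) :
    ∃ p : G.Walk x y, ∀ z ∈ p.support, z ∈ compSet G U c := by
  obtain ⟨hxU, hcx⟩ := mem_compSet.1 hx
  obtain ⟨hyU, hcy⟩ := mem_compSet.1 hy
  have hreach : (G.induce U).Reachable ⟨x, hxU⟩ ⟨y, hyU⟩ :=
    ConnectedComponent.exact (hcx.trans hcy.symm)
  obtain ⟨q⟩ := hreach
  refine ⟨q.map ((Embedding.induce U : G.induce U ↪g G)).toHom, ?_⟩
  intro z hz
  change z ∈ (q.map ((Embedding.induce U : G.induce U ↪g G)).toHom).support at hz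
  rw [Walk.support_map, List.mem_map] at hz
  obtain ⟨z', hz', rfl⟩ := hz
  refine mem_compSet.2 ⟨z'.2, ?_⟩
  show (G.induce U).connectedComponentMk z' = c
  rw [comp_of_walk_support q hz']
  exact hcx

lemma compSet_disjoint {c c' : (G.induce U).ConnectedComponent} (h : c ≠ c') :
    Disjoint (compSet G U c) (compSet G U c') := by
  rw [Set.disjoint_left]
  rintro x hx hx'
  obtain ⟨h1, h2⟩ := mem_compSet.1 hx
  obtain ⟨h1', h2'⟩ := mem_compSet.1 hx'
  exact h (h2 ▸ h2' ▸ rfl)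

lemma compSet_nonadj {c c' : (G.induce U).ConnectedComponent} (h : c ≠ c') {x y : V}
    (hx : x ∈ compSet G U c) (hy : y ∈ compSet G U c') : ¬ G.Adj x y := by
  intro hadj
  obtain ⟨h1, h2⟩ := mem_compSet.1 hx
  obtain ⟨h1', h2'⟩ := mem_compSet.1 hy
  have : (G.induce U).Adj ⟨x, h1⟩ ⟨y, h1'⟩ := by simpa using hadj
  exact h (h2 ▸ h2' ▸ (ConnectedComponent.connectedComponentMk_eq_of_adj this) ▸ rfl)

lemma compSet_iUnion : (⋃ c, compSet G U c) = U := by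
  ext x
  simp only [Set.mem_iUnion]
  constructor
  · rintro ⟨c, hc⟩; exact compSet_subset hc
  · intro hx
    exact ⟨(G.induce U).connectedComponentMk ⟨x, hx⟩, mem_compSet.2 ⟨hx, rfl⟩⟩

/-- A set carrying an induced path which lies in `U` and meets a component is inside it. -/
lemma subset_compSet_of_inducesPath {W : Set V} (hW : InducesPath G W) (hWU : W ⊆ U)
    {c : (G.induce U).ConnectedComponent} {x : V} (hx : x ∈ W) (hxc : x ∈ compSet G U c) :
    W ⊆ compSet G U c := by
  intro y hy
  obtain ⟨q, hq⟩ := InducesPath.exists_walk hW hx hy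
  have hsub : ∀ z ∈ q.support, z ∈ U := fun z hz => hWU (hq z hz)
  obtain ⟨hxU, hcx⟩ := mem_compSet.1 hxc
  have hkey := comp_of_walk_support (inducedWalk q hsub) (Walk.end_mem_support _)
  refine mem_compSet.2 ⟨hsub y q.end_mem_support, ?_⟩
  exact hkey.trans hcx

end comps

lemma disjointPaths_of_noBranch [Fintype V] {U : Set V} (hNC : NoCycleIn G U)
    (hdeg : ∀ x ∈ U, NoBranch G U x) :
    ∃ p : ℕ, IsDisjointPathsOn G U p ∧ PCN G U ≤ p := by
  classical
  have : Finite ((G.induce U).ConnectedComponent) := Quot.finite _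
  have cI : Fintype ((G.induce U).ConnectedComponent) := Fintype.ofFinite _
  set m := Fintype.card ((G.induce U).ConnectedComponent) with hm
  let e : Fin m ≃ (G.induce U).ConnectedComponent := (Fintype.equivFin _).symm
  have hgood : ∀ c : (G.induce U).ConnectedComponent,
      InducesPath G (compSet G U c) := by
    intro c
    obtain ⟨u, w, p, hp⟩ := exists_goodWalk (hNC.mono compSet_subset) (compSet_nonempty c)
      (fun x hx y hy => compSet_walk hx hy)
      (fun x hx a ha b hb cc hcc h1 h2 h3 =>
        hdeg x (compSet_subset hx) a (compSet_subset ha) b (compSet_subset hb)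
          cc (compSet_subset hcc) h1 h2 h3)
    exact hp.inducesPath
  have hDPO : IsDisjointPathsOn G U m := by
    refine ⟨fun i => compSet G U (e i), fun i => compSet_nonempty _, ?_, ?_, fun i => hgood _, ?_⟩
    · intro i j hij
      exact compSet_disjoint (fun h => hij (e.injective h))
    · ext x
      simp only [Set.mem_iUnion]
      constructor
      · rintro ⟨i, hi⟩; exact compSet_subset hi
      · intro hx
        obtain ⟨c, hc⟩ := Set.mem_iUnion.1 (compSet_iUnion (G := G) (U := U) ▸ hx)
        exact ⟨e.symm c, by simpa using hc⟩
    · intro i j hij u hu v hv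
      exact compSet_nonadj (fun h => hij (e.injective h)) hu hv
  refine ⟨m, hDPO, ?_⟩
  obtain ⟨parts, h1, h2, h3, h4, _⟩ := hDPO
  exact PCN_le ⟨parts, h1, h2, h3, h4⟩

lemma cycle_of_two_nbrs {U : Set V} {v : V} (hNC : NoCycleIn G U) (hvU : v ∈ U)
    {c c' : V} (hcv : c ≠ v) (hc'v : c' ≠ v) (hne : c' ≠ c)
    (ha : G.Adj v c) (ha' : G.Adj v c')
    (hwalk : ∃ p : G.Walk c' c, ∀ z ∈ p.support, z ∈ U \ {v}) : False := by
  classical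
  obtain ⟨p0, hp0⟩ := hwalk
  set P := p0.toPath with hP
  have hPsup : ∀ z ∈ P.val.support, z ∈ U \ {v} :=
    fun z hz => hp0 z (Walk.support_toPath_subset p0 hz)
  have hvP : v ∉ P.val.support := fun h => (hPsup v h).2 rfl
  set q : G.Walk c' v := P.val.append (Walk.cons ha.symm Walk.nil) with hq
  have hqsupp : q.support = P.val.support ++ [v] := by
    rw [hq, Walk.support_append, Walk.support_cons, Walk.support_nil]; rfl
  have hqPath : q.IsPath := by
    rw [Walk.isPath_def, hqsupp, List.nodup_append]
    exact ⟨P.2.support_nodup, List.nodup_singleton v,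
      by intro t ht b hb; rw [List.mem_singleton] at hb; rintro rfl; exact hvP (hb ▸ ht)⟩
  have hqe : s(v, c') ∉ q.edges := by
    rw [hq, Walk.edges_append, Walk.edges_cons, Walk.edges_nil, List.mem_append]
    rintro (h | h)
    · exact hvP (Walk.fst_mem_support_of_mem_edges _ h)
    · rw [List.mem_singleton, Sym2.eq_iff] at h
      rcases h with ⟨rfl, rfl⟩ | ⟨-, h⟩
      · exact hc'v rfl
      · exact hne h
  have hcyc : (Walk.cons ha' q).IsCycle := (Walk.cons_isCycle_iff q ha').2 ⟨hqPath, hqe⟩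
  refine hNC v (Walk.cons ha' q) ?_ hcyc
  intro z hz
  rw [Walk.support_cons, List.mem_cons] at hz
  rcases hz with rfl | hz
  · exact hvU
  · rw [hqsupp, List.mem_append, List.mem_singleton] at hz
    rcases hz with hz | rfl
    · exact (hPsup z hz).1
    · exact hvU

lemma branch_unique_nbr {U : Set V} {v : V} (hNC : NoCycleIn G U) (hvU : v ∈ U)
    {c : V} (hcv : c ≠ v) (hvc : G.Adj v c)
    {d : (G.induce (U \ {v})).ConnectedComponent} (hcB : c ∈ compSet G (U \ {v}) d) :
    ∀ y ∈ compSet G (U \ {v}) d, G.Adj v y → y = c := by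
  intro y hyB hvy
  by_contra hyc
  obtain ⟨p, hp⟩ := compSet_walk hyB hcB
  exact cycle_of_two_nbrs hNC hvU hcv (fun h => (compSet_subset hyB).2 h) hyc hvc hvy
    ⟨p, fun z hz => compSet_subset (hp z hz)⟩

lemma branch_goodwalk [Fintype V] {U : Set V} {v : V} (hNC : NoCycleIn G U) (hvU : v ∈ U)
    {c : V} (hcv : c ≠ v) (hvc : G.Adj v c)
    {d : (G.induce (U \ {v})).ConnectedComponent} (hcB : c ∈ compSet G (U \ {v}) d)
    (hfreeB : ∀ x ∈ compSet G (U \ {v}) d, NoBranch G U x) :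
    ∃ (u : V) (p : G.Walk u c), GoodWalk (compSet G (U \ {v}) d) p := by
  have hBU : compSet G (U \ {v}) d ⊆ U := fun x hx => (compSet_subset hx).1
  obtain ⟨u, w, p, hp⟩ := exists_goodWalk (hNC.mono hBU) ⟨c, hcB⟩
    (fun x hx y hy => compSet_walk hx hy)
    (fun x hx a ha b hb cc hcc g1 g2 g3 =>
      hfreeB x hx a (hBU ha) b (hBU hb) cc (hBU hcc) g1 g2 g3)
  have hend : c = u ∨ c = w := by
    refine hp.end_of_nbr_unique hcB ?_
    intro y z hy hz hay haz
    rcases hfreeB c hcB y (hBU hy) z (hBU hz) v hvU hay haz hvc.symm with h | h | h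
    · exact h
    · exact absurd h (fun h' => (compSet_subset hy).2 (h' ▸ rfl))
    · exact absurd h (fun h' => (compSet_subset hz).2 (h' ▸ rfl))
  rcases hend with rfl | rfl
  · exact ⟨w, p.reverse, hp.reverse⟩
  · exact ⟨u, p, hp⟩

lemma PCN_succ_le [Fintype V] {U : Set V} {v : V} (hNC : NoCycleIn G U) (hvU : v ∈ U)
    {c₁ c₂ : V} (h1 : c₁ ∈ U) (h2 : c₂ ∈ U) (hne : c₁ ≠ c₂) (hn1 : c₁ ≠ v) (hn2 : c₂ ≠ v)
    (ha1 : G.Adj v c₁) (ha2 : G.Adj v c₂)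
    (hfree1 : ∀ x ∈ compSet G (U \ {v})
        ((G.induce (U \ {v})).connectedComponentMk ⟨c₁, ⟨h1, hn1⟩⟩), NoBranch G U x)
    (hfree2 : ∀ x ∈ compSet G (U \ {v})
        ((G.induce (U \ {v})).connectedComponentMk ⟨c₂, ⟨h2, hn2⟩⟩), NoBranch G U x) :
    PCN G U + 1 ≤ PCN G (U \ {v}) := by
  classical
  set U' := U \ {v} with hU'
  set d₁ := (G.induce U').connectedComponentMk ⟨c₁, ⟨h1, hn1⟩⟩ with hd₁
  set d₂ := (G.induce U').connectedComponentMk ⟨c₂, ⟨h2, hn2⟩⟩ with hd₂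
  set B₁ := compSet G U' d₁ with hB₁
  set B₂ := compSet G U' d₂ with hB₂
  have hc₁B : c₁ ∈ B₁ := mem_compSet.2 ⟨⟨h1, hn1⟩, rfl⟩
  have hc₂B : c₂ ∈ B₂ := mem_compSet.2 ⟨⟨h2, hn2⟩, rfl⟩
  have hdne : d₁ ≠ d₂ := by
    intro h
    have hc₂B₁ : c₂ ∈ B₁ := by rw [hB₁, h]; exact hc₂B
    refine cycle_of_two_nbrs hNC hvU hn1 hn2 hne.symm ha1 ha2 ?_
    obtain ⟨p, hp⟩ := compSet_walk hc₂B₁ hc₁B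
    exact ⟨p, fun z hz => compSet_subset (hp z hz)⟩
  have hdisj : Disjoint B₁ B₂ := compSet_disjoint hdne
  have hnadjB : ∀ x ∈ B₁, ∀ y ∈ B₂, ¬ G.Adj x y := fun x hx y hy => compSet_nonadj hdne hx hy
  obtain ⟨u₁, p₁, hp₁⟩ := branch_goodwalk hNC hvU hn1 ha1 hc₁B hfree1
  obtain ⟨u₂, p₂', hp₂'⟩ := branch_goodwalk hNC hvU hn2 ha2 hc₂B hfree2
  have hglue := GoodWalk.glue (v := v) hp₁ hp₂'.reverse
    (fun x hx hx' => Set.disjoint_left.1 hdisj hx hx')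
    hnadjB
    (fun h => (compSet_subset h).2 rfl) (fun h => (compSet_subset h).2 rfl)
    ha1.symm ha2
    (branch_unique_nbr hNC hvU hn1 ha1 hc₁B)
    (branch_unique_nbr hNC hvU hn2 ha2 hc₂B)
  have hWpath : InducesPath G (B₁ ∪ {v} ∪ B₂) := hglue.inducesPath
  set m := PCN G U' with hm
  obtain ⟨parts, g1, g2, g3, g4⟩ := PCN_mem (G := G) U'
  have gsub : ∀ i, parts i ⊆ U' := fun i => g3 ▸ Set.subset_iUnion parts i
  have hconfine : ∀ (i) (d : (G.induce U').ConnectedComponent) (x : V), x ∈ parts i →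
      x ∈ compSet G U' d → parts i ⊆ compSet G U' d :=
    fun i d x hx hxc => subset_compSet_of_inducesPath (g4 i) (gsub i) hx hxc
  set J : Finset (Fin m) := Finset.univ.filter
    (fun i => Disjoint (parts i) (B₁ ∪ B₂)) with hJ
  have hcard : J.card + 2 ≤ m := by
    have hcU1 : c₁ ∈ ⋃ i, parts i := by rw [g3]; exact ⟨h1, hn1⟩
    have hcU2 : c₂ ∈ ⋃ i, parts i := by rw [g3]; exact ⟨h2, hn2⟩
    obtain ⟨i₁, hi₁⟩ := Set.mem_iUnion.1 hcU1
    obtain ⟨i₂, hi₂⟩ := Set.mem_iUnion.1 hcU2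
    have hi₁J : i₁ ∉ J := by
      rw [hJ, Finset.mem_filter]
      rintro ⟨-, h⟩
      exact Set.disjoint_left.1 h hi₁ (Or.inl hc₁B)
    have hi₂J : i₂ ∉ J := by
      rw [hJ, Finset.mem_filter]
      rintro ⟨-, h⟩
      exact Set.disjoint_left.1 h hi₂ (Or.inr hc₂B)
    have hne12 : i₁ ≠ i₂ := by
      rintro rfl
      have := hconfine i₁ d₁ c₁ hi₁ hc₁B hi₂
      exact Set.disjoint_left.1 hdisj this hc₂B
    have h2le : 2 ≤ Jᶜ.card := by
      have hsub2 : ({i₁, i₂} : Finset (Fin m)) ⊆ Jᶜ := by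
        intro t ht
        rw [Finset.mem_insert, Finset.mem_singleton] at ht
        rw [Finset.mem_compl]
        rcases ht with rfl | rfl
        · exact hi₁J
        · exact hi₂J
      calc 2 = ({i₁, i₂} : Finset (Fin m)).card := by
                rw [Finset.card_insert_of_notMem (by simpa using hne12), Finset.card_singleton]
           _ ≤ _ := Finset.card_le_card hsub2
    have hsplit : J.card + Jᶜ.card = m := by
      rw [Finset.card_add_card_compl, Fintype.card_fin]
    omega
  have hcover : IsPathCoverOn G U (J.card + 1) := by
    set e : ↥J ≃ Fin J.card := J.equivFin with he
    set newparts : Fin (J.card + 1) → Set V :=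
      Fin.snoc (fun i => parts (e.symm i).val) (B₁ ∪ {v} ∪ B₂) with hnew
    have hnp_cast : ∀ i : Fin J.card, newparts i.castSucc = parts (e.symm i).val := by
      intro i; rw [hnew]; simp
    have hnp_last : newparts (Fin.last J.card) = B₁ ∪ {v} ∪ B₂ := by
      rw [hnew]; simp
    have hJd : ∀ i : Fin J.card, Disjoint (parts (e.symm i).val) (B₁ ∪ B₂) := by
      intro i
      exact (Finset.mem_filter.1 (e.symm i).2).2
    have hdisjB : ∀ i : Fin J.card, Disjoint (parts (e.symm i).val) (B₁ ∪ {v} ∪ B₂) := by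
      intro i
      rw [Set.disjoint_right]
      intro x
      rintro ((hB | hv) | hB) hx
      · exact Set.disjoint_left.1 (hJd i) hx (Or.inl hB)
      · exact (gsub _ hx).2 hv
      · exact Set.disjoint_left.1 (hJd i) hx (Or.inr hB)
    refine ⟨newparts, ?_, ?_, ?_, ?_⟩
    · intro i
      rcases Fin.eq_castSucc_or_eq_last i with ⟨j, rfl⟩ | rfl
      · rw [hnp_cast]; exact g1 _
      · rw [hnp_last]; exact ⟨v, Or.inl (Or.inr rfl)⟩
    · intro i j hij
      rcases Fin.eq_castSucc_or_eq_last i with ⟨i', rfl⟩ | rfl <;>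
        rcases Fin.eq_castSucc_or_eq_last j with ⟨j', rfl⟩ | rfl
      · rw [hnp_cast, hnp_cast]
        refine g2 (fun h => hij ?_)
        have : i' = j' := e.symm.injective (Subtype.val_injective h)
        rw [this]
      · rw [hnp_cast, hnp_last]; exact hdisjB i'
      · rw [hnp_last, hnp_cast]; exact (hdisjB j').symm
      · exact absurd rfl hij
    · ext x
      simp only [Set.mem_iUnion]
      constructor
      · rintro ⟨i, hi⟩
        rcases Fin.eq_castSucc_or_eq_last i with ⟨i', rfl⟩ | rfl
        · rw [hnp_cast] at hi
          exact (gsub _ hi).1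
        · rw [hnp_last] at hi
          rcases hi with (hB | rfl) | hB
          · exact (compSet_subset hB).1
          · exact hvU
          · exact (compSet_subset hB).1
      · intro hx
        by_cases hxv : x = v
        · exact ⟨Fin.last _, by rw [hnp_last]; exact Or.inl (Or.inr hxv)⟩
        · have hxU' : x ∈ ⋃ i, parts i := by rw [g3]; exact ⟨hx, hxv⟩
          obtain ⟨i, hi⟩ := Set.mem_iUnion.1 hxU'
          by_cases hiJ : Disjoint (parts i) (B₁ ∪ B₂)
          · have hiJ' : i ∈ J := by rw [hJ, Finset.mem_filter]; exact ⟨Finset.mem_univ _, hiJ⟩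
            refine ⟨(e ⟨i, hiJ'⟩).castSucc, ?_⟩
            rw [hnp_cast]
            simp only [Equiv.symm_apply_apply]
            exact hi
          · obtain ⟨y, hy1, hy2⟩ := Set.not_disjoint_iff.1 hiJ
            refine ⟨Fin.last _, ?_⟩
            rw [hnp_last]
            rcases hy2 with hy2 | hy2
            · exact Or.inl (Or.inl (hconfine i d₁ y hy1 hy2 hi))
            · exact Or.inr (hconfine i d₂ y hy1 hy2 hi)
    · intro i
      rcases Fin.eq_castSucc_or_eq_last i with ⟨j, rfl⟩ | rfl
      · rw [hnp_cast]; exact g4 _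
      · rw [hnp_last]; exact hWpath
  have hfin := PCN_le hcover
  omega

/-- `x` is joined to `c` within `U'`. -/
def SameComp (G : SimpleGraph V) (U' : Set V) (c x : V) : Prop :=
  ∃ p : G.Walk c x, ∀ z ∈ p.support, z ∈ U'

lemma SameComp.mem_right {U' : Set V} {c x : V} (h : SameComp G U' c x) : x ∈ U' := by
  obtain ⟨p, hp⟩ := h; exact hp x p.end_mem_support

lemma SameComp.mem_left {U' : Set V} {c x : V} (h : SameComp G U' c x) : c ∈ U' := by
  obtain ⟨p, hp⟩ := h; exact hp c p.start_mem_support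

lemma SameComp.symm {U' : Set V} {c x : V} (h : SameComp G U' c x) : SameComp G U' x c := by
  obtain ⟨p, hp⟩ := h
  exact ⟨p.reverse, fun z hz => hp z (by rwa [Walk.support_reverse, List.mem_reverse] at hz)⟩

lemma SameComp.trans {U' : Set V} {c x y : V} (h : SameComp G U' c x)
    (h' : SameComp G U' x y) : SameComp G U' c y := by
  obtain ⟨p, hp⟩ := h
  obtain ⟨q, hq⟩ := h'
  refine ⟨p.append q, fun z hz => ?_⟩
  rw [Walk.mem_support_append_iff] at hz
  rcases hz with hz | hz
  · exact hp z hz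
  · exact hq z hz

lemma mem_compSet_iff_sameComp {U' : Set V} {c x : V} (hc : c ∈ U') :
    x ∈ compSet G U' ((G.induce U').connectedComponentMk ⟨c, hc⟩) ↔ SameComp G U' c x := by
  constructor
  · intro hx
    obtain ⟨p, hp⟩ := compSet_walk (mem_compSet.2 ⟨hc, rfl⟩) hx
    exact ⟨p, fun z hz => compSet_subset (hp z hz)⟩
  · rintro ⟨p, hp⟩
    refine mem_compSet.2 ⟨hp x p.end_mem_support, ?_⟩
    exact comp_of_walk_support (inducedWalk p hp) (Walk.end_mem_support _)

lemma sameComp_cons {U : Set V} {v c x : V} (hvU : v ∈ U) (ha : G.Adj v c)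
    (h : SameComp G (U \ {v}) c x) : SameComp G U v x := by
  obtain ⟨p, hp⟩ := h
  refine ⟨Walk.cons ha p, ?_⟩
  intro z hz
  rw [Walk.support_cons, List.mem_cons] at hz
  rcases hz with rfl | hz
  · exact hvU
  · exact (hp z hz).1

lemma reachable_of_sameComp {U : Set V} {a b : V} (h : SameComp G U a b)
    (ha : a ∈ U) (hb : b ∈ U) : (G.induce U).Reachable ⟨a, ha⟩ ⟨b, hb⟩ := by
  obtain ⟨p, hp⟩ := h
  exact ⟨inducedWalk p hp⟩

lemma sameComp_of_walk_avoid {U : Set V} {v : V} (hvU : v ∈ U) {a b : ↥U}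
    (q : (G.induce U).Walk a b) (hv : (⟨v, hvU⟩ : ↥U) ∉ q.support) :
    SameComp G (U \ {v}) a.val b.val := by
  refine ⟨q.map ((Embedding.induce U : G.induce U ↪g G)).toHom, ?_⟩
  intro z hz
  change z ∈ (q.map ((Embedding.induce U : G.induce U ↪g G)).toHom).support at hz
  rw [Walk.support_map, List.mem_map] at hz
  obtain ⟨z', hz', rfl⟩ := hz
  refine ⟨z'.2, fun h => hv ?_⟩
  have : z' = (⟨v, hvU⟩ : ↥U) := Subtype.ext h
  exact this ▸ hz'

lemma not_sameComp_of_nbrs {U : Set V} {v : V} (hNC : NoCycleIn G U) (hvU : v ∈ U)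
    {c c' : V} (hcv : c ≠ v) (hc'v : c' ≠ v) (hne : c' ≠ c)
    (ha : G.Adj v c) (ha' : G.Adj v c') : ¬ SameComp G (U \ {v}) c' c :=
  fun h => cycle_of_two_nbrs hNC hvU hcv hc'v hne ha ha' h

/-- The branch of `v` through neighbor `c` contains a branch vertex. -/
def BadBranch (G : SimpleGraph V) (U : Set V) (v c : V) : Prop :=
  ∃ x, SameComp G (U \ {v}) c x ∧ ¬ NoBranch G U x

lemma choose_branch_vertex [Fintype V] {U : Set V} (hNC : NoCycleIn G U)
    (hbad : ∃ v ∈ U, ¬ NoBranch G U v) :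
    ∃ v c₁ c₂ : V, v ∈ U ∧ c₁ ∈ U ∧ c₂ ∈ U ∧ c₁ ≠ c₂ ∧ c₁ ≠ v ∧ c₂ ≠ v ∧
      G.Adj v c₁ ∧ G.Adj v c₂ ∧
      (∀ x, SameComp G (U \ {v}) c₁ x → NoBranch G U x) ∧
      (∀ x, SameComp G (U \ {v}) c₂ x → NoBranch G U x) := by
  classical
  set H := G.induce U with hH
  set P : Finset (↥U × ↥U) := Finset.univ.filter
    (fun pr => ¬ NoBranch G U pr.1.val ∧ ¬ NoBranch G U pr.2.val ∧ pr.1 ≠ pr.2 ∧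
      H.Reachable pr.1 pr.2) with hP
  have main : ∃ v : V, ∃ hvU : v ∈ U, ¬ NoBranch G U v ∧
      ∀ c c' : V, c ≠ v → c' ≠ v → c' ≠ c → G.Adj v c → G.Adj v c' →
        BadBranch G U v c → BadBranch G U v c' → False := by
    rcases Finset.eq_empty_or_nonempty P with hPe | hPne
    · obtain ⟨v, hvU, hvB⟩ := hbad
      have hgood : ∀ c, c ≠ v → G.Adj v c → ¬ BadBranch G U v c := by
        rintro c hcv hac ⟨x, hx1, hx2⟩
        have hxv : x ≠ v := fun h => (hx1.mem_right).2 (h ▸ rfl)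
        have hxU : x ∈ U := hx1.mem_right.1
        have hreach : H.Reachable ⟨v, hvU⟩ ⟨x, hxU⟩ :=
          reachable_of_sameComp (sameComp_cons hvU hac hx1) hvU hxU
        have hmem : ((⟨v, hvU⟩, ⟨x, hxU⟩) : ↥U × ↥U) ∈ P := by
          rw [hP, Finset.mem_filter]
          exact ⟨Finset.mem_univ _, hvB, hx2,
            fun h => hxv (congrArg Subtype.val h).symm, hreach⟩
        rw [hPe] at hmem
        exact absurd hmem (Finset.notMem_empty _)
      exact ⟨v, hvU, hvB, fun c c' hcv hc'v _ hac _ hbc _ => hgood c hcv hac hbc⟩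
    · obtain ⟨pr, hprP, hprmax⟩ := P.exists_max_image (fun pr => H.dist pr.1 pr.2) hPne
      rw [hP, Finset.mem_filter] at hprP
      obtain ⟨-, hu₀B, hvB, hneuv, hreach₀⟩ := hprP
      set u₀ := pr.1 with hu₀
      set v' := pr.2 with hv'
      refine ⟨v'.val, v'.2, hvB, ?_⟩
      have pairbad : ∀ c, c ≠ v'.val → G.Adj v'.val c → BadBranch G U v'.val c →
          SameComp G (U \ {v'.val}) c u₀.val := by
        rintro c hcv hac ⟨x, hx1, hx2⟩
        by_contra hnot
        have hxU' : x ∈ U \ {v'.val} := hx1.mem_right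
        have hxv : x ≠ v'.val := fun h => hxU'.2 (h ▸ rfl)
        have hu₀x : u₀.val ≠ x := by
          rintro h
          exact hnot (by rw [h]; exact hx1)
        have hreach_vx : H.Reachable v' ⟨x, hxU'.1⟩ := by
          have := reachable_of_sameComp (sameComp_cons v'.2 hac hx1) v'.2 hxU'.1
          exact this
        have hreach_ux : H.Reachable u₀ ⟨x, hxU'.1⟩ := hreach₀.trans hreach_vx
        have hmemP : ((u₀, ⟨x, hxU'.1⟩) : ↥U × ↥U) ∈ P := by
          rw [hP, Finset.mem_filter]
          exact ⟨Finset.mem_univ _, hu₀B, hx2,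
            fun h => hu₀x (congrArg Subtype.val h), hreach_ux⟩
        obtain ⟨q, hqlen⟩ := SimpleGraph.Reachable.exists_walk_length_eq_dist hreach_ux
        have hvq : v' ∈ q.support := by
          by_contra hvq
          have := sameComp_of_walk_avoid v'.2 q (by
            intro h
            exact hvq (by
              have : (⟨v'.val, v'.2⟩ : ↥U) = v' := Subtype.ext rfl
              rwa [this] at h))
          exact hnot (hx1.trans this.symm)
        have hsplit : (q.takeUntil v' hvq).length + (q.dropUntil v' hvq).length = q.length := by
          have := congrArg Walk.length (q.take_spec hvq)
          rwa [Walk.length_append] at this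
        have hdrop : 1 ≤ (q.dropUntil v' hvq).length := by
          by_contra h
          have h0 : (q.dropUntil v' hvq).length = 0 := by omega
          have := Walk.eq_of_length_eq_zero h0
          exact hxv (congrArg Subtype.val this).symm
        have hd1 : H.dist u₀ v' ≤ (q.takeUntil v' hvq).length :=
          SimpleGraph.dist_le _
        have hd2 : H.dist u₀ ⟨x, hxU'.1⟩ ≤ H.dist u₀ v' := hprmax _ hmemP
        omega
      intro c c' hcv hc'v hne hac hac' hbc hbc'
      have h1 := pairbad c hcv hac hbc
      have h2 := pairbad c' hc'v hac' hbc'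
      exact not_sameComp_of_nbrs hNC v'.2 hcv hc'v hne hac hac' (h2.trans h1.symm)
  obtain ⟨v, hvU, hvB, hpair⟩ := main
  rw [NoBranch] at hvB
  push_neg at hvB
  obtain ⟨a, haU, b, hbU, c, hcU, hva, hvb, hvc, hab, hac, hbc⟩ := hvB
  have hav : a ≠ v := hva.ne'
  have hbv : b ≠ v := hvb.ne'
  have hcv : c ≠ v := hvc.ne'
  have unbad : ∀ {w : V}, w ∈ U → w ≠ v → G.Adj v w → ¬ BadBranch G U v w →
      ∀ x, SameComp G (U \ {v}) w x → NoBranch G U x := by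
    intro w _ _ _ hnb x hsx
    by_contra hx
    exact hnb ⟨x, hsx, hx⟩
  by_cases hBa : BadBranch G U v a
  · have hnb : ¬ BadBranch G U v b := fun h => hpair a b hav hbv hab.symm hva hvb hBa h
    have hnc : ¬ BadBranch G U v c := fun h => hpair a c hav hcv hac.symm hva hvc hBa h
    exact ⟨v, b, c, hvU, hbU, hcU, hbc, hbv, hcv, hvb, hvc,
      unbad hbU hbv hvb hnb, unbad hcU hcv hvc hnc⟩
  · by_cases hBb : BadBranch G U v b
    · have hnc : ¬ BadBranch G U v c := fun h => hpair b c hbv hcv hbc.symm hvb hvc hBb h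
      exact ⟨v, a, c, hvU, haU, hcU, hac, hav, hcv, hva, hvc,
        unbad haU hav hva hBa, unbad hcU hcv hvc hnc⟩
    · exact ⟨v, a, b, hvU, haU, hbU, hab, hav, hbv, hva, hvb,
        unbad haU hav hva hBa, unbad hbU hbv hvb hBb⟩

lemma core [Fintype V] [DecidableEq V] (n : ℕ) : ∀ (U : Finset V), U.card ≤ n →
    NoCycleIn G ↑U →
    ∃ (Q : Finset V) (p : ℕ), Q ⊆ U ∧ IsDisjointPathsOn G ↑(U \ Q) p ∧
      PCN G ↑U + Q.card ≤ p := by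
  induction n with
  | zero =>
    intro U hUcard hNC
    have hUe : U = ∅ := Finset.card_eq_zero.1 (Nat.le_antisymm hUcard (Nat.zero_le _))
    subst hUe
    obtain ⟨p, hDPO, hle⟩ := disjointPaths_of_noBranch hNC (by simp)
    refine ⟨∅, p, Finset.empty_subset _, by rwa [Finset.sdiff_empty], ?_⟩
    rw [Finset.card_empty, add_zero]
    exact hle
  | succ n ih =>
    intro U hUcard hNC
    by_cases hall : ∀ x ∈ (↑U : Set V), NoBranch G ↑U x
    · obtain ⟨p, hDPO, hle⟩ := disjointPaths_of_noBranch hNC hall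
      refine ⟨∅, p, Finset.empty_subset _, by rwa [Finset.sdiff_empty], ?_⟩
      rw [Finset.card_empty, add_zero]
      exact hle
    · push_neg at hall
      obtain ⟨v, c₁, c₂, hvU, h1, h2, hne, hn1, hn2, ha1, ha2, hfree1, hfree2⟩ :=
        choose_branch_vertex hNC hall
      have hvF : v ∈ U := hvU
      have hUU' : (↑(U.erase v) : Set V) = ↑U \ {v} := by
        simp [Finset.coe_erase]
      have hNC' : NoCycleIn G ↑(U.erase v) := by
        rw [hUU']; exact hNC.mono Set.diff_subset
      have hcard' : (U.erase v).card ≤ n := by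
        have := Finset.card_erase_of_mem hvF
        omega
      obtain ⟨Q', p', hQ'sub, hDPO', hineq'⟩ := ih (U.erase v) hcard' hNC'
      have hvQ' : v ∉ Q' := fun h => (Finset.mem_erase.1 (hQ'sub h)).1 rfl
      refine ⟨insert v Q', p', ?_, ?_, ?_⟩
      · intro t ht
        rw [Finset.mem_insert] at ht
        rcases ht with rfl | ht
        · exact hvF
        · exact Finset.erase_subset _ _ (hQ'sub ht)
      · have hsd : U \ insert v Q' = (U.erase v) \ Q' := by
          ext t
          simp only [Finset.mem_sdiff, Finset.mem_insert, Finset.mem_erase]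
          tauto
        rw [hsd]
        exact hDPO'
      · rw [Finset.card_insert_of_notMem hvQ']
        have hfree1' : ∀ x ∈ compSet G (↑U \ {v})
            ((G.induce (↑U \ {v})).connectedComponentMk ⟨c₁, ⟨h1, hn1⟩⟩), NoBranch G ↑U x :=
          fun x hx => hfree1 x ((mem_compSet_iff_sameComp (G := G) (show c₁ ∈ (↑U : Set V) \ {v} from ⟨h1, hn1⟩)).1 hx)
        have hfree2' : ∀ x ∈ compSet G (↑U \ {v})
            ((G.induce (↑U \ {v})).connectedComponentMk ⟨c₂, ⟨h2, hn2⟩⟩), NoBranch G ↑U x :=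
          fun x hx => hfree2 x ((mem_compSet_iff_sameComp (G := G) (show c₂ ∈ (↑U : Set V) \ {v} from ⟨h2, hn2⟩)).1 hx)
        have hK : PCN G ↑U + 1 ≤ PCN G (↑U \ {v}) :=
          PCN_succ_le hNC hvU h1 h2 hne hn1 hn2 ha1 ha2 hfree1' hfree2'
        have hPCN' : PCN G ↑(U.erase v) = PCN G (↑U \ {v}) := by rw [hUU']
        omega

lemma card_le_of_parts [Fintype V] {p : ℕ} {parts : Fin p → Set V}
    (h1 : ∀ i, (parts i).Nonempty) (h2 : Pairwise fun i j => Disjoint (parts i) (parts j)) :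
    p ≤ Fintype.card V := by
  choose x hx using h1
  have hinj : Function.Injective x := by
    intro i j hij
    by_contra hne
    exact Set.disjoint_left.1 (h2 hne) (hx i) (hij ▸ hx j)
  simpa using Fintype.card_le_of_injective x hinj

end DT

open DT in
theorem deltaLow_eq_Tminus {V : Type*} [Fintype V] (G : SimpleGraph V) :
    deltaLow G = Tminus G := by
  classical
  show sSup {d : ℤ | ∃ (S : Finset V) (p : ℕ),
      IsDisjointPathsOn G ((↑S : Set V)ᶜ) p ∧ d = (p : ℤ) - S.card}
    = sSup {d : ℤ | ∃ S : Finset V, (G.induce ((↑S : Set V)ᶜ)).IsAcyclic ∧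
      d = (pathCoverNumber (G.induce ((↑S : Set V)ᶜ)) : ℤ) - S.card}
  set A := {d : ℤ | ∃ (S : Finset V) (p : ℕ),
      IsDisjointPathsOn G ((↑S : Set V)ᶜ) p ∧ d = (p : ℤ) - S.card} with hA
  set B := {d : ℤ | ∃ S : Finset V, (G.induce ((↑S : Set V)ᶜ)).IsAcyclic ∧
      d = (pathCoverNumber (G.induce ((↑S : Set V)ᶜ)) : ℤ) - S.card} with hB
  have emptyDPO : IsDisjointPathsOn G ((↑(Finset.univ : Finset V) : Set V)ᶜ) 0 := by
    refine ⟨Fin.elim0, fun i => i.elim0, fun i => i.elim0, by simp, fun i => i.elim0,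
      fun i => i.elim0⟩
  have hAne : A.Nonempty :=
    ⟨(0 : ℤ) - (Finset.univ : Finset V).card, Finset.univ, 0, emptyDPO, by push_cast; ring⟩
  have hBne : B.Nonempty := by
    refine ⟨_, Finset.univ, ?_, rfl⟩
    intro a c hc
    exact absurd a.2 (by simp)
  have hAbdd : BddAbove A := by
    refine ⟨(Fintype.card V : ℤ), ?_⟩
    rintro d ⟨S, p, hDPO, rfl⟩
    obtain ⟨parts, h1, h2, -, -, -⟩ := hDPO
    have hp : p ≤ Fintype.card V := card_le_of_parts h1 h2
    have h0 : (0 : ℤ) ≤ (S.card : ℤ) := Int.ofNat_nonneg _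
    omega
  have hBbdd : BddAbove B := by
    refine ⟨(Fintype.card V : ℤ), ?_⟩
    rintro d ⟨S, hac, rfl⟩
    rw [pathCoverNumber_induce_eq]
    have := PCN_le_card (G := G) ((↑S : Set V)ᶜ)
    have h0 : (0 : ℤ) ≤ (S.card : ℤ) := Int.ofNat_nonneg _
    omega
  refine le_antisymm (csSup_le hAne ?_) (csSup_le hBne ?_)
  · rintro d ⟨S, p, hDPO, rfl⟩
    have hmemB : (PCN G ((↑S : Set V)ᶜ) : ℤ) - S.card ∈ B := by
      refine ⟨S, isAcyclic_induce_of_noCycleIn (noCycleIn_of_disjointPaths hDPO), ?_⟩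
      rw [pathCoverNumber_induce_eq]
    have hple := le_PCN_of_disjointPaths hDPO
    refine le_trans ?_ (le_csSup hBbdd hmemB)
    have : (p : ℤ) ≤ (PCN G ((↑S : Set V)ᶜ) : ℤ) := Int.ofNat_le.2 hple
    omega
  · rintro d ⟨S, hac, rfl⟩
    set U := ((↑S : Set V)ᶜ).toFinset with hU
    have hUco : (↑U : Set V) = ((↑S : Set V)ᶜ) := Set.coe_toFinset _
    have hNC : NoCycleIn G ↑U := by rw [hUco]; exact noCycleIn_of_isAcyclic hac
    obtain ⟨Q, p, hQsub, hDPO, hineq⟩ := core (G := G) U.card U le_rfl hNC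
    have hset : ((↑(S ∪ Q) : Set V))ᶜ = (↑(U \ Q) : Set V) := by
      ext x
      simp only [Finset.coe_union, Set.mem_compl_iff, Set.mem_union, Finset.mem_coe,
        Finset.coe_sdiff, Set.mem_diff]
      have : x ∈ U ↔ x ∉ S := by
        rw [← Finset.mem_coe, hUco, Set.mem_compl_iff, Finset.mem_coe]
      tauto
    have hmemA : (p : ℤ) - ((S ∪ Q).card : ℤ) ∈ A := by
      refine ⟨S ∪ Q, p, ?_, rfl⟩
      rw [hset]
      exact hDPO
    refine le_trans ?_ (le_csSup hAbdd hmemA)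
    rw [pathCoverNumber_induce_eq]
    have hPCNU : PCN G (↑U : Set V) = PCN G ((↑S : Set V)ᶜ) := by rw [hUco]
    have hcardle : (S ∪ Q).card ≤ S.card + Q.card := Finset.card_union_le _ _
    have hineq' : PCN G ((↑S : Set V)ᶜ) + Q.card ≤ p := by rw [← hPCNU]; exact hineq
    omega
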